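/- An RGF w of length n avoids the pattern 123 if and only if no letter of w is repeated more than twice. -/

import Mathlib

/-- The list of distinct letters of `u` in order of first occurrence. -/
def distinctsAux (u : List ℕ) : List ℕ :=
  u.foldl (fun acc x => if x ∈ acc then acc else acc ++ [x]) []

/-- The standardization of a word: relabel letters by order of first occurrence,
starting from `1`.  This is the restricted growth function of the set partition
determined by letter-equality, with blocks ordered by minima. -/
def stdWord (u : List ℕ) : List ℕ :=
  u.map (fun x => (distinctsAux u).idxOf x + 1)

/-- `w` is a restricted growth function: each letter is a positive integer,
the first letter is `1`, and every letter is at most one more than the maximum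
of the preceding letters. -/
def IsRGF (w : List ℕ) : Prop :=
  ∀ i : ℕ, ∀ h : i < w.length,
    1 ≤ w.get ⟨i, h⟩ ∧ w.get ⟨i, h⟩ ≤ ((w.take i).foldr max 0) + 1

/-- `w` avoids the pattern (RGF word) `v`: no subsequence of `w` standardizes to `v`.
This encodes set-partition pattern avoidance via the bijection with RGFs. -/
def AvoidsPat (w v : List ℕ) : Prop :=
  ¬ ∃ s : List ℕ, s.Sublist w ∧ stdWord s = v

theorem foldl_distinct_prefix (t : List ℕ) : ∀ acc : List ℕ,
    ∃ l, t.foldl (fun acc x => if x ∈ acc then acc else acc ++ [x]) acc = acc ++ l := by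
  induction t with
  | nil => exact fun acc => ⟨[], by simp⟩
  | cons y t ih =>
    intro acc
    simp only [List.foldl_cons]
    by_cases hy : y ∈ acc
    · simpa [hy] using ih acc
    · obtain ⟨l, hl⟩ := ih (acc ++ [y])
      exact ⟨y :: l, by simp [hy, hl]⟩

theorem distinctsAux_cons (a : ℕ) (t : List ℕ) :
    ∃ l, distinctsAux (a :: t) = a :: l := by
  obtain ⟨l, hl⟩ := foldl_distinct_prefix t [a]
  exact ⟨l, by simpa [distinctsAux] using hl⟩

/-- An RGF of length $n$ avoids the pattern $123$ (the RGF word `[1,1,1]`)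
iff no letter is repeated more than twice. -/
theorem stmt6 (n : ℕ) (w : List ℕ) (hw : IsRGF w) (hn : w.length = n) :
    AvoidsPat w [1, 1, 1] ↔ ∀ x : ℕ, w.count x ≤ 2 := by
  constructor
  · intro h x
    by_contra hc
    push_neg at hc
    have h3 : 3 ≤ w.count x := hc
    have hsub : (List.replicate 3 x).Sublist w := List.replicate_sublist_iff.mpr h3
    exact h ⟨List.replicate 3 x, hsub, by simp [stdWord, distinctsAux]⟩
  · rintro h ⟨s, hsub, hstd⟩
    have hlen : s.length = 3 := by
      have := congrArg List.length hstd
      simpa [stdWord] using this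
    match s, hlen with
    | [a, b, c], _ =>
      obtain ⟨l, hl⟩ := distinctsAux_cons a [b, c]
      simp only [stdWord, List.map_cons, List.map_nil, List.cons.injEq] at hstd
      rw [hl] at hstd
      obtain ⟨h1, h2, h3, -⟩ := hstd
      have hb : b = a := by
        by_contra hba
        rw [List.idxOf_cons_ne _ (by exact_mod_cast Ne.symm hba)] at h2
        omega
      have hc : c = a := by
        by_contra hca
        rw [List.idxOf_cons_ne _ (by exact_mod_cast Ne.symm hca)] at h3
        omega
      have hcnt := hsub.count_le a
      rw [hb, hc] at hcnt
      simp at hcnt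
      have := h a
      omega
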